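/- (Lower bound for the conditional variance of the stochastic heat convolution via the heat kernel.) Let p denote either the periodic heat kernel p^{per} or the Neumann heat kernel p^{Neu} on [0,1]. There exists a constant c > 0 such that for every 0 ≤ s < t ≤ 1 and every x ∈ [0,1]: ∫_s^t ∫_0^1 p_{t−r}(x,y)² dy dr ≥ c (t − s)^{1/2}. -/

import Mathlib

open MeasureTheory

/-- The one-dimensional Gaussian heat kernel `Γ(t,x) = (2πt)^{-1/2} exp(-x²/(2t))`. -/
noncomputable def heatGamma (t x : ℝ) : ℝ :=
  (2 * Real.pi * t) ^ (-(1:ℝ)/2) * Real.exp (-x ^ 2 / (2 * t))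

/-- The periodic heat kernel on `[0,1]`. -/
noncomputable def pPer (t x y : ℝ) : ℝ := ∑' n : ℤ, heatGamma t (x - y + n)

/-- The Neumann heat kernel on `[0,1]`. -/
noncomputable def pNeu (t x y : ℝ) : ℝ :=
  ∑' n : ℤ, (heatGamma t (x - y + 2 * n) + heatGamma t (x + y + 2 * n))

namespace HeatAux

open Real Set

/-- The auxiliary constant `∑ exp(-n²/16)`. -/
noncomputable def Sc : ℝ := ∑' n : ℤ, Real.exp (-(n:ℝ)^2/16)

lemma summable_sc_nat : Summable (fun n : ℕ => Real.exp (-(n:ℝ)^2/16)) := by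
  refine Summable.of_nonneg_of_le (fun n => (Real.exp_pos _).le) (fun n => ?_)
    (Real.summable_exp_nat_mul_iff.mpr (by norm_num : (-1/16 : ℝ) < 0))
  apply Real.exp_le_exp.2
  have h : (n:ℝ) ≤ (n:ℝ)^2 := by
    rcases Nat.eq_zero_or_pos n with h | h
    · simp [h]
    · have h1 : (1:ℝ) ≤ (n:ℝ) := by exact_mod_cast h
      nlinarith
  linarith

lemma summable_sc : Summable (fun n : ℤ => Real.exp (-(n:ℝ)^2/16)) := by
  apply Summable.of_nat_of_neg
  · exact summable_sc_nat
  · have := summable_sc_nat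
    refine this.congr fun n => ?_
    push_cast
    ring_nf

lemma Sc_nonneg : 0 ≤ Sc := tsum_nonneg fun n => (Real.exp_pos _).le

lemma rpow_neg_half (A : ℝ) (hA : 0 ≤ A) : A ^ (-(1:ℝ)/2) = (Real.sqrt A)⁻¹ := by
  rw [Real.sqrt_eq_rpow, show (-(1:ℝ)/2) = -(1/2) by norm_num, Real.rpow_neg hA]

lemma heatGamma_nonneg (t z : ℝ) : 0 ≤ heatGamma t z := by
  unfold heatGamma
  rcases lt_trichotomy (2 * Real.pi * t) 0 with h | h | h
  · rw [Real.rpow_def_of_neg h]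
    have : Real.cos (-(1:ℝ)/2 * Real.pi) = 0 := by
      rw [show (-(1:ℝ)/2 * Real.pi) = -(Real.pi/2) by ring, Real.cos_neg, Real.cos_pi_div_two]
    rw [this]
    simp
  · rw [h, Real.zero_rpow (by norm_num)]
    simp
  · positivity

lemma heatGamma_le (t z : ℝ) (ht : 0 ≤ t) :
    heatGamma t z ≤ (2 * Real.pi * t) ^ (-(1:ℝ)/2) := by
  unfold heatGamma
  have h1 : Real.exp (-z ^ 2 / (2 * t)) ≤ 1 := by
    rw [Real.exp_le_one_iff]
    rcases eq_or_lt_of_le ht with h | h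
    · simp [← h]
    · exact div_nonpos_of_nonpos_of_nonneg (by nlinarith [sq_nonneg z]) (by positivity)
  have h2 : (0:ℝ) ≤ (2 * Real.pi * t) ^ (-(1:ℝ)/2) :=
    Real.rpow_nonneg (by positivity) _
  calc (2 * Real.pi * t) ^ (-(1:ℝ)/2) * Real.exp (-z ^ 2 / (2 * t))
      ≤ (2 * Real.pi * t) ^ (-(1:ℝ)/2) * 1 := by
        apply mul_le_mul_of_nonneg_left h1 h2
    _ = _ := by ring

lemma heatGamma_zero (z : ℝ) : heatGamma 0 z = 0 := by
  unfold heatGamma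
  rw [mul_zero, Real.zero_rpow (by norm_num)]
  simp

/-- Key tail estimate: if `|z| ≥ |n|/2` and `|n| ≥ 2` then
`Γ(τ,z) ≤ 4 exp(-n²/16)` uniformly for `0 < τ ≤ 1`. -/
lemma gamma_tail {τ : ℝ} (h0 : 0 < τ) (h1 : τ ≤ 1) {z : ℝ} {n : ℤ}
    (hn : 2 ≤ |n|) (hz : (|n| : ℝ)/2 ≤ |z|) :
    heatGamma τ z ≤ 4 * Real.exp (-(n:ℝ)^2/16) := by
  have hA : (0:ℝ) < 2 * Real.pi * τ := by positivity
  have hn2 : (4:ℝ) ≤ (n:ℝ)^2 := by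
    have : (2:ℝ) ≤ |(n:ℝ)| := by exact_mod_cast (by exact_mod_cast hn : (2:ℤ) ≤ |n|)
    nlinarith [abs_nonneg (n:ℝ), sq_abs (n:ℝ)]
  have hz2 : (n:ℝ)^2/4 ≤ z^2 := by
    nlinarith [hz, abs_nonneg (n:ℝ), abs_nonneg z, sq_abs (n:ℝ), sq_abs z]
  -- exponential bound
  have hexp : Real.exp (-z^2/(2*τ)) ≤ Real.exp (-1/(4*τ)) * Real.exp (-(n:ℝ)^2/16) := by
    rw [← Real.exp_add]
    apply Real.exp_le_exp.2
    have e1 : -z^2/(2*τ) ≤ -(n:ℝ)^2/(8*τ) := by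
      rw [div_le_div_iff₀ (by positivity) (by positivity)]
      nlinarith
    have e2 : -(n:ℝ)^2/(8*τ) = (-(n:ℝ)^2/(16*τ)) + (-(n:ℝ)^2/(16*τ)) := by
      field_simp; ring
    have e3 : -(n:ℝ)^2/(16*τ) ≤ -1/(4*τ) := by
      rw [div_le_div_iff₀ (by positivity) (by positivity)]
      nlinarith
    have e4 : -(n:ℝ)^2/(16*τ) ≤ -(n:ℝ)^2/16 := by
      rw [div_le_div_iff₀ (by positivity) (by norm_num)]
      nlinarith [sq_nonneg (n:ℝ)]
    linarith
  -- prefactor bound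
  have hpre : (2 * Real.pi * τ) ^ (-(1:ℝ)/2) ≤ (Real.sqrt τ)⁻¹ := by
    rw [rpow_neg_half _ hA.le]
    apply inv_anti₀ (Real.sqrt_pos.2 h0)
    apply Real.sqrt_le_sqrt
    nlinarith [Real.pi_gt_three]
  have hkey : (Real.sqrt τ)⁻¹ * Real.exp (-1/(4*τ)) ≤ 4 := by
    have hu : (1:ℝ) ≤ τ⁻¹ := by
      rw [← one_div]
      exact (le_div_iff₀ h0).2 (by linarith)
    have h2 : (Real.sqrt τ)⁻¹ = Real.sqrt τ⁻¹ := by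
      rw [Real.sqrt_inv]
    have h3 : Real.sqrt τ⁻¹ ≤ τ⁻¹ := by
      calc Real.sqrt τ⁻¹ ≤ Real.sqrt (τ⁻¹ * τ⁻¹) := by
            apply Real.sqrt_le_sqrt; nlinarith
        _ = τ⁻¹ := by rw [Real.sqrt_mul_self (by positivity)]
    have h4 : τ⁻¹ ≤ 4 * Real.exp (τ⁻¹/4) := by
      have := Real.add_one_le_exp (τ⁻¹/4)
      nlinarith
    have h5 : Real.exp (-1/(4*τ)) = (Real.exp (τ⁻¹/4))⁻¹ := by
      rw [← Real.exp_neg]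
      congr 1
      field_simp
    have h6 : Real.sqrt τ⁻¹ * (Real.exp (τ⁻¹/4))⁻¹ ≤ τ⁻¹ / Real.exp (τ⁻¹/4) := by
      rw [div_eq_mul_inv]
      exact mul_le_mul_of_nonneg_right h3 (by positivity)
    have h7 : τ⁻¹ / Real.exp (τ⁻¹/4) ≤ 4 := (div_le_iff₀ (Real.exp_pos _)).2 (by linarith)
    rw [h2, h5]
    linarith
  have h0' := heatGamma_nonneg τ z
  unfold heatGamma
  calc (2 * Real.pi * τ) ^ (-(1:ℝ)/2) * Real.exp (-z ^ 2 / (2 * τ))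
      ≤ (Real.sqrt τ)⁻¹ * (Real.exp (-1/(4*τ)) * Real.exp (-(n:ℝ)^2/16)) := by
        apply mul_le_mul hpre (by rw [neg_div] at hexp ⊢; exact hexp) (Real.exp_pos _).le
          (by positivity)
    _ = ((Real.sqrt τ)⁻¹ * Real.exp (-1/(4*τ))) * Real.exp (-(n:ℝ)^2/16) := by ring
    _ ≤ 4 * Real.exp (-(n:ℝ)^2/16) := by
        apply mul_le_mul_of_nonneg_right hkey (Real.exp_pos _).le

def s₃ : Finset ℤ := {-1, 0, 1}

lemma mem_s₃_iff {n : ℤ} : n ∉ s₃ ↔ 2 ≤ |n| := by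
  simp only [s₃, Finset.mem_insert, Finset.mem_singleton]
  rcases le_or_gt 0 n with h | h
  · rw [abs_of_nonneg h]; omega
  · rw [abs_of_neg h]; omega

/-- Summability of shifted Gaussian series. -/
lemma summable_kernel {τ : ℝ} (h0 : 0 < τ) (h1 : τ ≤ 1) (c : ℤ → ℝ)
    (hc : ∀ n : ℤ, 2 ≤ |n| → (|n| : ℝ)/2 ≤ |c n|) :
    Summable (fun n : ℤ => heatGamma τ (c n)) := by
  rw [← Finset.summable_compl_iff s₃]
  apply Summable.of_nonneg_of_le (fun i => heatGamma_nonneg _ _)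
    (fun i => ?_) (((summable_sc.mul_left 4).subtype _))
  have hi : 2 ≤ |(i:ℤ)| := mem_s₃_iff.1 i.2
  exact gamma_tail h0 h1 hi (hc i hi)

/-- The tsum splits into the three central terms plus a uniformly bounded tail. -/
lemma tsum_kernel_le {τ : ℝ} (h0 : 0 < τ) (h1 : τ ≤ 1) (c : ℤ → ℝ)
    (hc : ∀ n : ℤ, 2 ≤ |n| → (|n| : ℝ)/2 ≤ |c n|) :
    ∑' n : ℤ, heatGamma τ (c n) ≤
      (heatGamma τ (c (-1)) + heatGamma τ (c 0) + heatGamma τ (c 1)) + 4 * Sc := by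
  have hsum := summable_kernel h0 h1 c hc
  rw [← Summable.sum_add_tsum_compl (s := s₃) hsum]
  have hsum3 : ∑ j ∈ s₃, heatGamma τ (c j)
      = heatGamma τ (c (-1)) + heatGamma τ (c 0) + heatGamma τ (c 1) := by
    rw [show s₃ = insert (-1) (insert 0 {1}) from rfl,
      Finset.sum_insert (by decide), Finset.sum_insert (by decide), Finset.sum_singleton]
    ring
  rw [hsum3]
  apply add_le_add le_rfl
  have step1 : ∑' n : ↑((s₃ : Set ℤ))ᶜ, heatGamma τ (c n)
      ≤ ∑' n : ↑((s₃ : Set ℤ))ᶜ, 4 * Real.exp (-((n:ℤ):ℝ)^2/16) := by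
    apply Summable.tsum_le_tsum _ (hsum.subtype _) ((summable_sc.mul_left 4).subtype _)
    intro i
    have hi : 2 ≤ |(i:ℤ)| := by
      have := i.2
      simp only [Set.mem_compl_iff, Finset.coe_sort_coe, Finset.mem_coe] at this
      exact mem_s₃_iff.1 this
    exact gamma_tail h0 h1 hi (hc i hi)
  have step2 : ∑' n : ↑((s₃ : Set ℤ))ᶜ, 4 * Real.exp (-((n:ℤ):ℝ)^2/16)
      ≤ ∑' n : ℤ, 4 * Real.exp (-(n:ℝ)^2/16) :=
    Summable.tsum_subtype_le _ _ (fun n => by positivity) (summable_sc.mul_left 4)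
  have step3 : ∑' n : ℤ, 4 * Real.exp (-(n:ℝ)^2/16) = 4 * Sc := tsum_mul_left
  calc ∑' n : ↑((s₃ : Set ℤ))ᶜ, heatGamma τ (c n) ≤ _ := step1
    _ ≤ _ := step2
    _ = 4 * Sc := step3


section LowerPointwise

/-- Shift bound for the periodic family. -/
lemma hc_per {x y : ℝ} (hx : x ∈ Icc (0:ℝ) 1) (hy : y ∈ Icc (0:ℝ) 1) :
    ∀ n : ℤ, 2 ≤ |n| → (|(n:ℝ)|)/2 ≤ |x - y + n| := by
  intro n hn
  have h2 : (2:ℝ) ≤ |(n:ℝ)| := by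
    rw [← Int.cast_abs]; exact_mod_cast hn
  have hd : |x - y| ≤ 1 := abs_le.2 ⟨by linarith [hx.1, hy.2], by linarith [hx.2, hy.1]⟩
  have key : |(n:ℝ)| ≤ |x - y + n| + |x - y| := by
    calc |(n:ℝ)| = |(x - y + n) - (x - y)| := by ring_nf
      _ ≤ |x - y + n| + |x - y| := by
          rw [sub_eq_add_neg]
          exact (abs_add_le _ _).trans (by rw [abs_neg])
  linarith

lemma hc_neuA {x y : ℝ} (hx : x ∈ Icc (0:ℝ) 1) (hy : y ∈ Icc (0:ℝ) 1) :
    ∀ n : ℤ, 2 ≤ |n| → (|(n:ℝ)|)/2 ≤ |x - y + 2*n| := by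
  intro n hn
  have h2 : (2:ℝ) ≤ |(n:ℝ)| := by
    rw [← Int.cast_abs]; exact_mod_cast hn
  have hd : |x - y| ≤ 1 := abs_le.2 ⟨by linarith [hx.1, hy.2], by linarith [hx.2, hy.1]⟩
  have key : |2*(n:ℝ)| ≤ |x - y + 2*n| + |x - y| := by
    calc |2*(n:ℝ)| = |(x - y + 2*n) - (x - y)| := by ring_nf
      _ ≤ |x - y + 2*n| + |x - y| := by
          rw [sub_eq_add_neg]
          exact (abs_add_le _ _).trans (by rw [abs_neg])
  have h4 : |2*(n:ℝ)| = 2 * |(n:ℝ)| := by rw [abs_mul]; norm_num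
  linarith

lemma hc_neuB {x y : ℝ} (hx : x ∈ Icc (0:ℝ) 1) (hy : y ∈ Icc (0:ℝ) 1) :
    ∀ n : ℤ, 2 ≤ |n| → (|(n:ℝ)|)/2 ≤ |x + y + 2*n| := by
  intro n hn
  have h2 : (2:ℝ) ≤ |(n:ℝ)| := by
    rw [← Int.cast_abs]; exact_mod_cast hn
  have hd : |x + y| ≤ 2 := abs_le.2 ⟨by linarith [hx.1, hy.1], by linarith [hx.2, hy.2]⟩
  have key : |2*(n:ℝ)| ≤ |x + y + 2*n| + |x + y| := by
    calc |2*(n:ℝ)| = |(x + y + 2*n) - (x + y)| := by ring_nf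
      _ ≤ |x + y + 2*n| + |x + y| := by
          rw [sub_eq_add_neg]
          exact (abs_add_le _ _).trans (by rw [abs_neg])
  have h4 : |2*(n:ℝ)| = 2 * |(n:ℝ)| := by rw [abs_mul]; norm_num
  linarith

lemma summable_per {τ x y : ℝ} (h0 : 0 < τ) (h1 : τ ≤ 1) (hx : x ∈ Icc (0:ℝ) 1)
    (hy : y ∈ Icc (0:ℝ) 1) : Summable fun n : ℤ => heatGamma τ (x - y + n) :=
  summable_kernel h0 h1 _ (hc_per hx hy)

lemma summable_neuA {τ x y : ℝ} (h0 : 0 < τ) (h1 : τ ≤ 1) (hx : x ∈ Icc (0:ℝ) 1)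
    (hy : y ∈ Icc (0:ℝ) 1) : Summable fun n : ℤ => heatGamma τ (x - y + 2*n) :=
  summable_kernel h0 h1 _ (hc_neuA hx hy)

lemma summable_neuB {τ x y : ℝ} (h0 : 0 < τ) (h1 : τ ≤ 1) (hx : x ∈ Icc (0:ℝ) 1)
    (hy : y ∈ Icc (0:ℝ) 1) : Summable fun n : ℤ => heatGamma τ (x + y + 2*n) :=
  summable_kernel h0 h1 _ (hc_neuB hx hy)

lemma lower_per {τ x y : ℝ} (h0 : 0 < τ) (h1 : τ ≤ 1) (hx : x ∈ Icc (0:ℝ) 1)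
    (hy : y ∈ Icc (0:ℝ) 1) : heatGamma τ (x - y) ≤ pPer τ x y := by
  have h := Summable.le_tsum (summable_per h0 h1 hx hy) 0 (fun j _ => heatGamma_nonneg _ _)
  simpa [pPer] using h

lemma lower_neu {τ x y : ℝ} (h0 : 0 < τ) (h1 : τ ≤ 1) (hx : x ∈ Icc (0:ℝ) 1)
    (hy : y ∈ Icc (0:ℝ) 1) : heatGamma τ (x - y) ≤ pNeu τ x y := by
  have hsum : Summable fun n : ℤ =>
      heatGamma τ (x - y + 2*n) + heatGamma τ (x + y + 2*n) :=
    (summable_neuA h0 h1 hx hy).add (summable_neuB h0 h1 hx hy)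
  have h := Summable.le_tsum hsum 0 (fun j _ =>
    add_nonneg (heatGamma_nonneg _ _) (heatGamma_nonneg _ _))
  have h2 : heatGamma τ (x - y) ≤ heatGamma τ (x - y + 2*(0:ℤ)) + heatGamma τ (x + y + 2*(0:ℤ)) := by
    push_cast
    simp only [mul_zero, add_zero]
    exact le_add_of_nonneg_right (heatGamma_nonneg _ _)
  exact h2.trans h

end LowerPointwise

section Integrals

lemma integrable_heatGamma {τ : ℝ} (h0 : 0 < τ) :
    Integrable (fun z => heatGamma τ z) := by
  have heq : (fun z => heatGamma τ z)
      = fun z => (2*Real.pi*τ)^(-(1:ℝ)/2) * Real.exp (-(1/(2*τ)) * z^2) := by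
    funext z
    unfold heatGamma
    congr 1
    congr 1
    field_simp
  rw [heq]
  exact (integrable_exp_neg_mul_sq (by positivity)).const_mul _

lemma integral_heatGamma {τ : ℝ} (h0 : 0 < τ) : ∫ z, heatGamma τ z = 1 := by
  have heq : (fun z => heatGamma τ z)
      = fun z => (2*Real.pi*τ)^(-(1:ℝ)/2) * Real.exp (-(1/(2*τ)) * z^2) := by
    funext z
    unfold heatGamma
    congr 1
    congr 1
    field_simp
  have hA : (0:ℝ) < 2 * Real.pi * τ := by positivity
  rw [heq, integral_const_mul, integral_gaussian]
  rw [show Real.pi / (1/(2*τ)) = 2 * Real.pi * τ by field_simp]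
  rw [rpow_neg_half _ hA.le]
  exact inv_mul_cancel₀ (ne_of_gt (Real.sqrt_pos.2 hA))

lemma int_gamma_sub {τ : ℝ} (h0 : 0 < τ) (a : ℝ) :
    IntegrableOn (fun y => heatGamma τ (a - y)) (Icc (0:ℝ) 1) ∧
    ∫ y in Icc (0:ℝ) 1, heatGamma τ (a - y) ≤ 1 := by
  have hi : Integrable (fun y => heatGamma τ (a - y)) :=
    (integrable_heatGamma h0).comp_sub_left a
  refine ⟨hi.integrableOn, ?_⟩
  calc ∫ y in Icc (0:ℝ) 1, heatGamma τ (a - y)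
      ≤ ∫ y, heatGamma τ (a - y) :=
        setIntegral_le_integral hi (Filter.Eventually.of_forall fun y => heatGamma_nonneg _ _)
    _ = ∫ z, heatGamma τ z := by rw [integral_sub_left_eq_self (fun z => heatGamma τ z) volume a]
    _ = 1 := integral_heatGamma h0

lemma int_gamma_add {τ : ℝ} (h0 : 0 < τ) (a : ℝ) :
    IntegrableOn (fun y => heatGamma τ (a + y)) (Icc (0:ℝ) 1) ∧
    ∫ y in Icc (0:ℝ) 1, heatGamma τ (a + y) ≤ 1 := by
  have hi : Integrable (fun y => heatGamma τ (a + y)) :=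
    (integrable_heatGamma h0).comp_add_left a
  refine ⟨hi.integrableOn, ?_⟩
  calc ∫ y in Icc (0:ℝ) 1, heatGamma τ (a + y)
      ≤ ∫ y, heatGamma τ (a + y) :=
        setIntegral_le_integral hi (Filter.Eventually.of_forall fun y => heatGamma_nonneg _ _)
    _ = ∫ z, heatGamma τ z := by rw [integral_add_left_eq_self (fun z => heatGamma τ z) a]
    _ = 1 := integral_heatGamma h0

lemma integrableOn_const_Icc (c : ℝ) : IntegrableOn (fun _ : ℝ => c) (Icc (0:ℝ) 1) := by
  refine integrableOn_const ?_
  rw [Real.volume_Icc]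
  exact ENNReal.ofReal_ne_top

lemma setIntegral_const_Icc (c : ℝ) : ∫ _ in Icc (0:ℝ) 1, c = c := by
  rw [setIntegral_const, Real.volume_real_Icc]
  norm_num

end Integrals

section Measurability

lemma measurable_heatGamma : Measurable fun w : ℝ × ℝ => heatGamma w.1 w.2 := by
  unfold heatGamma
  exact ((measurable_fst.const_mul (2*Real.pi)).pow measurable_const).mul
    ((((measurable_snd.pow_const 2).neg).div (measurable_fst.const_mul 2)).exp)

lemma measurable_tsum_nonneg {α : Type*} [MeasurableSpace α] {f : ℤ → α → ℝ}
    (hm : ∀ n, Measurable (f n)) (h0 : ∀ n v, 0 ≤ f n v) :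
    Measurable fun v => ∑' n, f n v := by
  have key : ∀ v, ∑' n, f n v = (∑' n, ENNReal.ofReal (f n v)).toReal := by
    intro v
    by_cases h : Summable fun n => f n v
    · rw [← ENNReal.ofReal_tsum_of_nonneg (fun n => h0 n v) h,
        ENNReal.toReal_ofReal (tsum_nonneg (fun n => h0 n v))]
    · rw [tsum_eq_zero_of_not_summable h]
      have htop : (∑' n, ENNReal.ofReal (f n v)) = ⊤ := by
        by_contra htop
        apply h
        have h2 : Summable fun n => (f n v).toNNReal := by
          apply ENNReal.tsum_coe_ne_top_iff_summable.1
          simpa [ENNReal.ofReal] using htop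
        have h3 := NNReal.summable_coe.2 h2
        refine h3.congr fun n => ?_
        rw [Real.coe_toNNReal _ (h0 n v)]
      rw [htop]
      simp
  have heq : (fun v => ∑' n, f n v)
      = fun v => (∑' n, ENNReal.ofReal (f n v)).toReal := funext key
  rw [heq]
  exact (Measurable.ennreal_tsum fun n =>
    ENNReal.measurable_ofReal.comp (hm n)).ennreal_toReal

lemma measurable_pPer (x : ℝ) : Measurable fun v : ℝ × ℝ => pPer v.1 x v.2 := by
  unfold pPer
  apply measurable_tsum_nonneg (f := fun n (v : ℝ × ℝ) => heatGamma v.1 (x - v.2 + n))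
  · intro n
    exact measurable_heatGamma.comp
      (measurable_fst.prodMk ((measurable_const.sub measurable_snd).add_const _))
  · intro n v
    exact heatGamma_nonneg _ _

lemma measurable_pNeu (x : ℝ) : Measurable fun v : ℝ × ℝ => pNeu v.1 x v.2 := by
  unfold pNeu
  apply measurable_tsum_nonneg
    (f := fun n (v : ℝ × ℝ) =>
      heatGamma v.1 (x - v.2 + 2*n) + heatGamma v.1 (x + v.2 + 2*n))
  · intro n
    exact (measurable_heatGamma.comp
      (measurable_fst.prodMk ((measurable_const.sub measurable_snd).add_const _))).add
      (measurable_heatGamma.comp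
      (measurable_fst.prodMk ((measurable_const.add measurable_snd).add_const _)))
  · intro n v
    exact add_nonneg (heatGamma_nonneg _ _) (heatGamma_nonneg _ _)

lemma pPer_nonneg (τ x y : ℝ) : 0 ≤ pPer τ x y :=
  tsum_nonneg fun n => heatGamma_nonneg _ _

lemma pNeu_nonneg (τ x y : ℝ) : 0 ≤ pNeu τ x y :=
  tsum_nonneg fun n => add_nonneg (heatGamma_nonneg _ _) (heatGamma_nonneg _ _)

lemma pPer_zero (x y : ℝ) : pPer 0 x y = 0 := by
  unfold pPer
  simp [heatGamma_zero]

lemma pNeu_zero (x y : ℝ) : pNeu 0 x y = 0 := by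
  unfold pNeu
  simp [heatGamma_zero]

end Measurability

section Upper

/-- The constant in the upper bound for the inner integral. -/
noncomputable def C0 : ℝ := (6 + 8*Sc)^2

lemma C0_nonneg : 0 ≤ C0 := sq_nonneg _

/-- Generic bound for the integral of a square. -/
lemma sq_integral_le {f g : ℝ → ℝ} {M B : ℝ}
    (hfm : Measurable f) (hf0 : ∀ y, 0 ≤ f y)
    (hfg : ∀ y ∈ Icc (0:ℝ) 1, f y ≤ g y)
    (hgM : ∀ y ∈ Icc (0:ℝ) 1, g y ≤ M)
    (hgi : IntegrableOn g (Icc (0:ℝ) 1))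
    (hgB : ∫ y in Icc (0:ℝ) 1, g y ≤ B)
    (hM : 0 ≤ M) :
    IntegrableOn (fun y => (f y)^2) (Icc (0:ℝ) 1) ∧
    ∫ y in Icc (0:ℝ) 1, (f y)^2 ≤ M * B := by
  have hbound : ∀ y ∈ Icc (0:ℝ) 1, (f y)^2 ≤ M * g y := by
    intro y hy
    have h1 := hf0 y
    have h2 := hfg y hy
    have h3 := hgM y hy
    nlinarith
  have hMg : IntegrableOn (fun y => M * g y) (Icc (0:ℝ) 1) := hgi.const_mul M
  have hint : IntegrableOn (fun y => (f y)^2) (Icc (0:ℝ) 1) := by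
    apply Integrable.mono' hMg ((hfm.pow_const 2).aestronglyMeasurable)
    rw [ae_restrict_iff' measurableSet_Icc]
    refine Filter.Eventually.of_forall fun y hy => ?_
    rw [Real.norm_eq_abs, abs_of_nonneg (sq_nonneg _)]
    exact hbound y hy
  refine ⟨hint, ?_⟩
  calc ∫ y in Icc (0:ℝ) 1, (f y)^2
      ≤ ∫ y in Icc (0:ℝ) 1, M * g y :=
        setIntegral_mono_on hint hMg measurableSet_Icc hbound
    _ = M * ∫ y in Icc (0:ℝ) 1, g y := integral_const_mul M g
    _ ≤ M * B := mul_le_mul_of_nonneg_left hgB hM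

lemma rpow_facts {τ : ℝ} (h0 : 0 < τ) (h1 : τ ≤ 1) :
    (2*Real.pi*τ)^(-(1:ℝ)/2) ≤ τ^(-(1:ℝ)/2) ∧ (1:ℝ) ≤ τ^(-(1:ℝ)/2) := by
  constructor
  · apply Real.rpow_le_rpow_of_nonpos h0 (by nlinarith [Real.pi_gt_three]) (by norm_num)
  · calc (1:ℝ) = (1:ℝ)^(-(1:ℝ)/2) := (Real.one_rpow _).symm
      _ ≤ τ^(-(1:ℝ)/2) := Real.rpow_le_rpow_of_nonpos h0 h1 (by norm_num)

lemma inner_upper_per {τ x : ℝ} (h0 : 0 < τ) (h1 : τ ≤ 1) (hx : x ∈ Icc (0:ℝ) 1) :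
    IntegrableOn (fun y => (pPer τ x y)^2) (Icc (0:ℝ) 1) ∧
    ∫ y in Icc (0:ℝ) 1, (pPer τ x y)^2 ≤ C0 * τ ^ (-(1:ℝ)/2) := by
  set K := (2*Real.pi*τ)^(-(1:ℝ)/2) with hK
  have hK0 : 0 ≤ K := Real.rpow_nonneg (by positivity) _
  set g : ℝ → ℝ := fun y =>
    heatGamma τ ((x-1) - y) + heatGamma τ (x - y) + heatGamma τ ((x+1) - y) + 4*Sc with hg
  have hfg : ∀ y ∈ Icc (0:ℝ) 1, pPer τ x y ≤ g y := by
    intro y hy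
    have h := tsum_kernel_le h0 h1 (fun n : ℤ => x - y + (n:ℝ)) (hc_per hx hy)
    rw [show x - y + ((-1:ℤ):ℝ) = (x-1) - y by push_cast; ring,
      show x - y + ((0:ℤ):ℝ) = x - y by push_cast; ring,
      show x - y + ((1:ℤ):ℝ) = (x+1) - y by push_cast; ring] at h
    exact h
  have hgM : ∀ y ∈ Icc (0:ℝ) 1, g y ≤ 3*K + 4*Sc := by
    intro y _
    have b1 := heatGamma_le τ ((x-1) - y) h0.le
    have b2 := heatGamma_le τ (x - y) h0.le
    have b3 := heatGamma_le τ ((x+1) - y) h0.le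
    rw [hg]
    dsimp only
    rw [hK]
    linarith
  have hgi : IntegrableOn g (Icc (0:ℝ) 1) := by
    apply Integrable.add
    apply Integrable.add
    apply Integrable.add
    · exact (int_gamma_sub h0 (x-1)).1
    · exact (int_gamma_sub h0 x).1
    · exact (int_gamma_sub h0 (x+1)).1
    · exact integrableOn_const_Icc _
  have hgB : ∫ y in Icc (0:ℝ) 1, g y ≤ 3 + 4*Sc := by
    have i1 := (int_gamma_sub h0 (x-1)).1
    have i2 := (int_gamma_sub h0 x).1
    have i3 := (int_gamma_sub h0 (x+1)).1
    have i12 : IntegrableOn (fun y => heatGamma τ ((x-1) - y) + heatGamma τ (x - y))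
        (Icc (0:ℝ) 1) := i1.add i2
    have i123 : IntegrableOn (fun y => heatGamma τ ((x-1) - y) + heatGamma τ (x - y)
        + heatGamma τ ((x+1) - y)) (Icc (0:ℝ) 1) := i12.add i3
    have split : ∫ y in Icc (0:ℝ) 1, g y
        = (((∫ y in Icc (0:ℝ) 1, heatGamma τ ((x-1) - y))
          + ∫ y in Icc (0:ℝ) 1, heatGamma τ (x - y))
          + ∫ y in Icc (0:ℝ) 1, heatGamma τ ((x+1) - y))
          + ∫ _ in Icc (0:ℝ) 1, (4*Sc : ℝ) := by
      calc ∫ y in Icc (0:ℝ) 1, g y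
          = ∫ y in Icc (0:ℝ) 1, (heatGamma τ ((x-1) - y) + heatGamma τ (x - y)
            + heatGamma τ ((x+1) - y) + 4*Sc) := rfl
        _ = _ := by
            rw [integral_add i123 (integrableOn_const_Icc _), integral_add i12 i3,
              integral_add i1 i2]
    rw [split, setIntegral_const_Icc]
    linarith [(int_gamma_sub h0 (x-1)).2, (int_gamma_sub h0 x).2, (int_gamma_sub h0 (x+1)).2]
  have hmain := sq_integral_le
    (f := fun y => pPer τ x y) (g := g) (M := 3*K + 4*Sc) (B := 3 + 4*Sc)
    ((measurable_pPer x).comp (measurable_const.prodMk measurable_id))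
    (fun y => pPer_nonneg _ _ _) hfg hgM hgi hgB
    (by linarith [hK0, Sc_nonneg])
  obtain ⟨hint, hle⟩ := hmain
  refine ⟨hint, ?_⟩
  obtain ⟨hK1, hT1⟩ := rpow_facts h0 h1
  set T := τ^(-(1:ℝ)/2) with hT
  have hS := Sc_nonneg
  have hbound : (3*K + 4*Sc) * (3 + 4*Sc) ≤ C0 * T := by
    rw [C0]
    nlinarith [mul_nonneg hS (sub_nonneg.2 hT1), mul_nonneg hS (sub_nonneg.2 hK1),
      mul_nonneg (mul_nonneg hS hS) (sub_nonneg.2 hT1), sq_nonneg Sc]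
  exact hle.trans hbound

lemma inner_upper_neu {τ x : ℝ} (h0 : 0 < τ) (h1 : τ ≤ 1) (hx : x ∈ Icc (0:ℝ) 1) :
    IntegrableOn (fun y => (pNeu τ x y)^2) (Icc (0:ℝ) 1) ∧
    ∫ y in Icc (0:ℝ) 1, (pNeu τ x y)^2 ≤ C0 * τ ^ (-(1:ℝ)/2) := by
  set K := (2*Real.pi*τ)^(-(1:ℝ)/2) with hK
  have hK0 : 0 ≤ K := Real.rpow_nonneg (by positivity) _
  set g : ℝ → ℝ := fun y =>
    (heatGamma τ ((x-2) - y) + heatGamma τ (x - y) + heatGamma τ ((x+2) - y))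
    + (heatGamma τ ((x-2) + y) + heatGamma τ (x + y) + heatGamma τ ((x+2) + y)) + 8*Sc with hg
  have hfg : ∀ y ∈ Icc (0:ℝ) 1, pNeu τ x y ≤ g y := by
    intro y hy
    have hsplit : pNeu τ x y = (∑' n : ℤ, heatGamma τ (x - y + 2*(n:ℝ)))
        + ∑' n : ℤ, heatGamma τ (x + y + 2*(n:ℝ)) :=
      Summable.tsum_add (summable_neuA h0 h1 hx hy) (summable_neuB h0 h1 hx hy)
    have hA := tsum_kernel_le h0 h1 (fun n : ℤ => x - y + 2*(n:ℝ)) (hc_neuA hx hy)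
    have hB := tsum_kernel_le h0 h1 (fun n : ℤ => x + y + 2*(n:ℝ)) (hc_neuB hx hy)
    rw [show x - y + 2*((-1:ℤ):ℝ) = (x-2) - y by push_cast; ring,
      show x - y + 2*((0:ℤ):ℝ) = x - y by push_cast; ring,
      show x - y + 2*((1:ℤ):ℝ) = (x+2) - y by push_cast; ring] at hA
    rw [show x + y + 2*((-1:ℤ):ℝ) = (x-2) + y by push_cast; ring,
      show x + y + 2*((0:ℤ):ℝ) = x + y by push_cast; ring,
      show x + y + 2*((1:ℤ):ℝ) = (x+2) + y by push_cast; ring] at hB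
    rw [hsplit]
    have hgy : g y = (heatGamma τ ((x-2) - y) + heatGamma τ (x - y) + heatGamma τ ((x+2) - y))
        + (heatGamma τ ((x-2) + y) + heatGamma τ (x + y) + heatGamma τ ((x+2) + y)) + 8*Sc := rfl
    rw [hgy]
    linarith
  have hgM : ∀ y ∈ Icc (0:ℝ) 1, g y ≤ 6*K + 8*Sc := by
    intro y _
    have b1 := heatGamma_le τ ((x-2) - y) h0.le
    have b2 := heatGamma_le τ (x - y) h0.le
    have b3 := heatGamma_le τ ((x+2) - y) h0.le
    have b4 := heatGamma_le τ ((x-2) + y) h0.le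
    have b5 := heatGamma_le τ (x + y) h0.le
    have b6 := heatGamma_le τ ((x+2) + y) h0.le
    have hgy : g y = (heatGamma τ ((x-2) - y) + heatGamma τ (x - y) + heatGamma τ ((x+2) - y))
        + (heatGamma τ ((x-2) + y) + heatGamma τ (x + y) + heatGamma τ ((x+2) + y)) + 8*Sc := rfl
    rw [hgy, hK]
    linarith
  have i1 := (int_gamma_sub h0 (x-2)).1
  have i2 := (int_gamma_sub h0 x).1
  have i3 := (int_gamma_sub h0 (x+2)).1
  have i4 := (int_gamma_add h0 (x-2)).1
  have i5 := (int_gamma_add h0 x).1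
  have i6 := (int_gamma_add h0 (x+2)).1
  have i12 : IntegrableOn (fun y => heatGamma τ ((x-2) - y) + heatGamma τ (x - y))
      (Icc (0:ℝ) 1) := i1.add i2
  have i123 : IntegrableOn (fun y => heatGamma τ ((x-2) - y) + heatGamma τ (x - y)
      + heatGamma τ ((x+2) - y)) (Icc (0:ℝ) 1) := i12.add i3
  have i45 : IntegrableOn (fun y => heatGamma τ ((x-2) + y) + heatGamma τ (x + y))
      (Icc (0:ℝ) 1) := i4.add i5
  have i456 : IntegrableOn (fun y => heatGamma τ ((x-2) + y) + heatGamma τ (x + y)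
      + heatGamma τ ((x+2) + y)) (Icc (0:ℝ) 1) := i45.add i6
  have iS : IntegrableOn (fun y => (heatGamma τ ((x-2) - y) + heatGamma τ (x - y)
      + heatGamma τ ((x+2) - y)) + (heatGamma τ ((x-2) + y) + heatGamma τ (x + y)
      + heatGamma τ ((x+2) + y))) (Icc (0:ℝ) 1) := i123.add i456
  have hgi : IntegrableOn g (Icc (0:ℝ) 1) := iS.add (integrableOn_const_Icc _)
  have hgB : ∫ y in Icc (0:ℝ) 1, g y ≤ 6 + 8*Sc := by
    have split : ∫ y in Icc (0:ℝ) 1, g y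
        = ((((∫ y in Icc (0:ℝ) 1, heatGamma τ ((x-2) - y))
          + ∫ y in Icc (0:ℝ) 1, heatGamma τ (x - y))
          + ∫ y in Icc (0:ℝ) 1, heatGamma τ ((x+2) - y))
          + (((∫ y in Icc (0:ℝ) 1, heatGamma τ ((x-2) + y))
          + ∫ y in Icc (0:ℝ) 1, heatGamma τ (x + y))
          + ∫ y in Icc (0:ℝ) 1, heatGamma τ ((x+2) + y)))
          + ∫ _ in Icc (0:ℝ) 1, (8*Sc : ℝ) := by
      calc ∫ y in Icc (0:ℝ) 1, g y
          = ∫ y in Icc (0:ℝ) 1, ((heatGamma τ ((x-2) - y) + heatGamma τ (x - y)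
            + heatGamma τ ((x+2) - y)) + (heatGamma τ ((x-2) + y) + heatGamma τ (x + y)
            + heatGamma τ ((x+2) + y)) + 8*Sc) := rfl
        _ = _ := by
            rw [integral_add iS (integrableOn_const_Icc _), integral_add i123 i456,
              integral_add i12 i3, integral_add i1 i2, integral_add i45 i6,
              integral_add i4 i5]
    rw [split, setIntegral_const_Icc]
    linarith [(int_gamma_sub h0 (x-2)).2, (int_gamma_sub h0 x).2, (int_gamma_sub h0 (x+2)).2,
      (int_gamma_add h0 (x-2)).2, (int_gamma_add h0 x).2, (int_gamma_add h0 (x+2)).2]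
  have hmain := sq_integral_le
    (f := fun y => pNeu τ x y) (g := g) (M := 6*K + 8*Sc) (B := 6 + 8*Sc)
    ((measurable_pNeu x).comp (measurable_const.prodMk measurable_id))
    (fun y => pNeu_nonneg _ _ _) hfg hgM hgi hgB
    (by linarith [hK0, Sc_nonneg])
  obtain ⟨hint, hle⟩ := hmain
  refine ⟨hint, ?_⟩
  obtain ⟨hK1, hT1⟩ := rpow_facts h0 h1
  set T := τ^(-(1:ℝ)/2) with hT
  have hS := Sc_nonneg
  have hbound : (6*K + 8*Sc) * (6 + 8*Sc) ≤ C0 * T := by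
    rw [C0]
    nlinarith [mul_nonneg hS (sub_nonneg.2 hT1), mul_nonneg hS (sub_nonneg.2 hK1),
      mul_nonneg (mul_nonneg hS hS) (sub_nonneg.2 hT1), sq_nonneg Sc]
  exact hle.trans hbound

end Upper


section Main

set_option maxHeartbeats 1000000 in
lemma aux_main (p : ℝ → ℝ → ℝ → ℝ) (C : ℝ) (hC : 0 ≤ C)
    (hmeas : ∀ x : ℝ, Measurable fun v : ℝ × ℝ => p v.1 x v.2)
    (hzero : ∀ x y : ℝ, p 0 x y = 0)
    (hlow : ∀ τ x y : ℝ, 0 < τ → τ ≤ 1 → x ∈ Icc (0:ℝ) 1 → y ∈ Icc (0:ℝ) 1 →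
      heatGamma τ (x - y) ≤ p τ x y)
    (hup : ∀ τ x : ℝ, 0 < τ → τ ≤ 1 → x ∈ Icc (0:ℝ) 1 →
      IntegrableOn (fun y => (p τ x y)^2) (Icc (0:ℝ) 1) ∧
      ∫ y in Icc (0:ℝ) 1, (p τ x y)^2 ≤ C * τ ^ (-(1:ℝ)/2)) :
    ∀ s t : ℝ, 0 ≤ s → s < t → t ≤ 1 → ∀ x ∈ Icc (0:ℝ) 1,
      (1/96) * (t - s) ^ ((1:ℝ)/2) ≤ ∫ r in s..t, ∫ y in Icc (0:ℝ) 1, (p (t - r) x y) ^ 2 := by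
  intro s t hs hst ht1 x hx
  have hδ : 0 < t - s := by linarith
  have hδ1 : t - s ≤ 1 := by linarith
  set δ : ℝ := t - s with hδdef
  set F : ℝ → ℝ := fun r => ∫ y in Icc (0:ℝ) 1, (p (t - r) x y)^2 with hFdef
  have hF0 : ∀ r, 0 ≤ F r := fun r =>
    setIntegral_nonneg measurableSet_Icc (fun y _ => sq_nonneg _)
  -- measurability of the inner integral as a function of r
  have hFmeas : MeasureTheory.StronglyMeasurable F := by
    have hjoint : Measurable fun w : ℝ × ℝ => (p (t - w.1) x w.2)^2 :=
      ((hmeas x).comp ((measurable_const.sub measurable_fst).prodMk measurable_snd)).pow_const 2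
    exact hjoint.stronglyMeasurable.integral_prod_right'
  -- integrable majorant
  set G : ℝ → ℝ := fun r => C * (t - r) ^ (-(1:ℝ)/2) with hGdef
  have hGint : IntervalIntegrable G volume s t := by
    have h1 : IntervalIntegrable (fun u : ℝ => u ^ (-(1:ℝ)/2)) volume (t - s) (t - t) :=
      intervalIntegral.intervalIntegrable_rpow' (by norm_num)
    have h2 := (h1.comp_sub_left t).const_mul C
    simpa using h2
  have hFG : ∀ r ∈ Ioc s t, F r ≤ G r := by
    intro r hr
    rcases eq_or_lt_of_le hr.2 with heq | hlt
    · have hFt : F r = 0 := by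
        rw [hFdef]
        simp only [heq, sub_self, hzero]
        simp
      have hGt : G r = 0 := by
        rw [hGdef]
        simp only [heq, sub_self]
        rw [Real.zero_rpow (by norm_num)]
        simp
      rw [hFt, hGt]
    · exact (hup (t - r) x (by linarith) (by linarith [hr.1]) hx).2
  have hFint : IntervalIntegrable F volume s t := by
    rw [intervalIntegrable_iff_integrableOn_Ioc_of_le hst.le]
    have hG' : IntegrableOn G (Ioc s t) := by
      rw [← intervalIntegrable_iff_integrableOn_Ioc_of_le hst.le]
      exact hGint
    apply Integrable.mono' hG' hFmeas.aestronglyMeasurable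
    rw [ae_restrict_iff' measurableSet_Ioc]
    refine Filter.Eventually.of_forall fun r hr => ?_
    rw [Real.norm_eq_abs, abs_of_nonneg (hF0 r)]
    exact hFG r hr
  set m : ℝ := s + δ/2 with hm
  have hsm : s ≤ m := by rw [hm]; linarith
  have hmt : m ≤ t := by rw [hm, hδdef]; linarith
  have hFsm : IntervalIntegrable F volume s m :=
    hFint.mono_set (Set.uIcc_subset_uIcc Set.left_mem_uIcc
      (by rw [Set.uIcc_of_le hst.le]; exact ⟨hsm, hmt⟩))
  have hFmt : IntervalIntegrable F volume m t :=
    hFint.mono_set (Set.uIcc_subset_uIcc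
      (by rw [Set.uIcc_of_le hst.le]; exact ⟨hsm, hmt⟩) Set.right_mem_uIcc)
  have hsplit : ∫ r in s..t, F r = (∫ r in s..m, F r) + ∫ r in m..t, F r :=
    (intervalIntegral.integral_add_adjacent_intervals hFsm hFmt).symm
  have h2 : 0 ≤ ∫ r in m..t, F r :=
    intervalIntegral.integral_nonneg hmt (fun u _ => hF0 u)
  -- pointwise lower bound on [s, m]
  set con : ℝ := Real.sqrt δ / (48 * δ) with hcon
  have hsqδ : 0 < Real.sqrt δ := Real.sqrt_pos.2 hδ
  have hlow2 : ∀ r ∈ Icc s m, con ≤ F r := by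
    intro r hr
    have hτl : δ/2 ≤ t - r := by
      have := hr.2
      rw [hm] at this
      rw [hδdef]
      rw [hδdef] at this
      linarith
    have hτu : t - r ≤ δ := by
      have := hr.1
      rw [hδdef]
      linarith
    have hτ0 : 0 < t - r := by linarith
    have hτ1 : t - r ≤ 1 := by linarith
    set τ : ℝ := t - r with hτdef
    set L : ℝ := Real.sqrt δ / 2 with hL
    have hL0 : 0 < L := by rw [hL]; linarith
    have hL2 : L ≤ 1/2 := by
      have h1 : Real.sqrt δ ≤ 1 := by
        rw [show (1:ℝ) = Real.sqrt 1 by simp]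
        exact Real.sqrt_le_sqrt hδ1
      rw [hL]; linarith
    have hLsq : L^2 = δ/4 := by
      rw [hL, div_pow, Real.sq_sqrt hδ.le]
      norm_num
    set a : ℝ := if x ≤ 1/2 then x else x - L with ha
    have hax : a ≤ x ∧ x ≤ a + L := by
      by_cases h : x ≤ 1/2
      · rw [ha, if_pos h]
        exact ⟨le_refl _, by linarith⟩
      · rw [ha, if_neg h]
        exact ⟨by linarith, by linarith⟩
    have haJ : Icc a (a+L) ⊆ Icc (0:ℝ) 1 := by
      intro y hy
      by_cases h : x ≤ 1/2
      · rw [ha, if_pos h] at hy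
        exact ⟨le_trans hx.1 hy.1, by linarith [hy.2]⟩
      · rw [ha, if_neg h] at hy
        push_neg at h
        constructor
        · linarith [hy.1]
        · linarith [hy.2, hx.2]
    have hpint := hup τ x hτ0 hτ1 hx
    have hγcont : Continuous fun y : ℝ => heatGamma τ (x - y) := by
      unfold heatGamma
      fun_prop
    have hγint : IntegrableOn (fun y => (heatGamma τ (x - y))^2) (Icc (0:ℝ) 1) :=
      (hγcont.pow 2).integrableOn_Icc
    have c1 : ∫ y in Icc (0:ℝ) 1, (heatGamma τ (x - y))^2 ≤ F r := by
      apply setIntegral_mono_on hγint hpint.1 measurableSet_Icc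
      intro y hy
      exact pow_le_pow_left₀ (heatGamma_nonneg _ _) (hlow τ x y hτ0 hτ1 hx hy) 2
    have c2 : ∫ y in Icc a (a+L), (heatGamma τ (x - y))^2
        ≤ ∫ y in Icc (0:ℝ) 1, (heatGamma τ (x - y))^2 :=
      setIntegral_mono_set hγint (Filter.Eventually.of_forall fun y => sq_nonneg _)
        (HasSubset.Subset.eventuallyLE haJ)
    have c3 : ∀ y ∈ Icc a (a+L), 1/(24*δ) ≤ (heatGamma τ (x - y))^2 := by
      intro y hy
      have hz2 : (x - y)^2 ≤ L^2 := by
        have h1 := hy.1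
        have h2 := hy.2
        have h3 := hax.1
        have h4 := hax.2
        nlinarith
      have hA : (0:ℝ) < 2 * Real.pi * τ := by positivity
      have hsq : (heatGamma τ (x - y))^2
          = (2*Real.pi*τ)^(-(1:ℝ)) * Real.exp (-(x-y)^2/τ) := by
        unfold heatGamma
        rw [mul_pow]
        congr 1
        · rw [← Real.rpow_natCast ((2*Real.pi*τ)^(-(1:ℝ)/2)) 2, ← Real.rpow_mul hA.le]
          norm_num
        · rw [sq, ← Real.exp_add]
          congr 1
          field_simp
          ring
      rw [hsq]
      have k1 : (8*δ)⁻¹ ≤ (2*Real.pi*τ)⁻¹ := by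
        apply inv_anti₀ hA
        have hπτ : Real.pi * τ ≤ 4 * δ := by nlinarith [Real.pi_le_four, Real.pi_pos]
        linarith
      have k2 : (1:ℝ)/3 ≤ Real.exp (-(x-y)^2/τ) := by
        have e1 : -(1:ℝ) ≤ -(x-y)^2/τ := by
          rw [neg_div, neg_le_neg_iff]
          rw [div_le_one hτ0]
          nlinarith
        have e2 : Real.exp (-(1:ℝ)) ≤ Real.exp (-(x-y)^2/τ) := Real.exp_le_exp.2 e1
        have e3 : Real.exp 1 ≤ 3 := by linarith [Real.exp_one_lt_d9]
        have e4 : Real.exp (-(1:ℝ)) = (Real.exp 1)⁻¹ := Real.exp_neg 1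
        have e5 : Real.exp 1 * (Real.exp 1)⁻¹ = 1 :=
          mul_inv_cancel₀ (ne_of_gt (Real.exp_pos 1))
        have e6 : (0:ℝ) < (Real.exp 1)⁻¹ := inv_pos.2 (Real.exp_pos 1)
        nlinarith
      have hrw : (2*Real.pi*τ)^(-(1:ℝ)) = (2*Real.pi*τ)⁻¹ := Real.rpow_neg_one _
      rw [hrw]
      have hfin : 1/(24*δ) = (8*δ)⁻¹ * (1/3) := by
        field_simp
        ring
      rw [hfin]
      apply mul_le_mul k1 k2 (by norm_num) (by positivity)
    have c4 : ∫ y in Icc a (a+L), (1/(24*δ) : ℝ)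
        ≤ ∫ y in Icc a (a+L), (heatGamma τ (x - y))^2 := by
      apply setIntegral_mono_on _ (hγint.mono_set haJ) measurableSet_Icc c3
      refine integrableOn_const ?_
      rw [Real.volume_Icc]
      exact ENNReal.ofReal_ne_top
    have c5 : ∫ y in Icc a (a+L), (1/(24*δ) : ℝ) = L * (1/(24*δ)) := by
      rw [setIntegral_const, Real.volume_real_Icc, show a + L - a = L by ring,
        max_eq_left hL0.le, smul_eq_mul]
    have hcon2 : con = L * (1/(24*δ)) := by
      rw [hcon, hL, div_mul_div_comm, mul_one, show (2:ℝ)*(24*δ) = 48*δ by ring]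
    rw [hcon2, ← c5]
    exact c4.trans (c2.trans c1)
  have h1 : (δ/2) * con ≤ ∫ r in s..m, F r := by
    have := intervalIntegral.integral_mono_on hsm (intervalIntegrable_const (c := con))
      hFsm hlow2
    rw [intervalIntegral.integral_const, hm, smul_eq_mul] at this
    calc (δ/2) * con = (s + δ/2 - s) * con := by ring
      _ ≤ _ := this
  have hfinal : Real.sqrt δ / 96 ≤ ∫ r in s..t, F r := by
    rw [hsplit]
    have : (δ/2) * con = Real.sqrt δ / 96 := by
      rw [hcon]
      have hδ' : δ ≠ 0 := ne_of_gt hδ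
      field_simp
      all_goals first | ring | tauto
    linarith
  have hrpow : δ ^ ((1:ℝ)/2) = Real.sqrt δ := (Real.sqrt_eq_rpow δ).symm
  calc (1/96) * δ ^ ((1:ℝ)/2) = Real.sqrt δ / 96 := by rw [hrpow]; ring
    _ ≤ ∫ r in s..t, F r := hfinal

end Main

end HeatAux

/-- **Lower bound for the conditional variance of the stochastic heat convolution via the
heat kernel.** -/
theorem heat_convolution_variance_lower_bound
    (p : ℝ → ℝ → ℝ → ℝ) (hp : p = pPer ∨ p = pNeu) :
    ∃ c : ℝ, 0 < c ∧ ∀ s t : ℝ, 0 ≤ s → s < t → t ≤ 1 →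
      ∀ x ∈ Set.Icc (0:ℝ) 1,
        c * (t - s) ^ ((1:ℝ)/2)
          ≤ ∫ r in s..t, ∫ y in Set.Icc (0:ℝ) 1, (p (t - r) x y) ^ 2 := by
  refine ⟨1/96, by norm_num, ?_⟩
  rcases hp with hp | hp <;> subst hp
  · exact HeatAux.aux_main pPer HeatAux.C0 HeatAux.C0_nonneg
      HeatAux.measurable_pPer HeatAux.pPer_zero
      (fun τ x y h0 h1 hx hy => HeatAux.lower_per h0 h1 hx hy)
      (fun τ x h0 h1 hx => HeatAux.inner_upper_per h0 h1 hx)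
  · exact HeatAux.aux_main pNeu HeatAux.C0 HeatAux.C0_nonneg
      HeatAux.measurable_pNeu HeatAux.pNeu_zero
      (fun τ x y h0 h1 hx hy => HeatAux.lower_neu h0 h1 hx hy)
      (fun τ x h0 h1 hx => HeatAux.inner_upper_neu h0 h1 hx)
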